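/- Let G be a group with presentation ⟨Y | R⟩, i.e., G is the quotient of the free group F(Y) on a finite set Y by the normal closure of a set of relators R ⊆ F(Y). For S ⊆ Y, let φ_S : F(Y) → F(S) be the homomorphism sending y to y if y ∈ S and y to 1 if y ∉ S, and let ρ_S : G → G_S be the quotient of G by the normal closure of the images of Y ∖ S. If φ_S(R) ⊆ R, then S is retractive in G: the composite of the inclusion ⟨S⟩ ↪ G (the subgroup of G generated by the images of S) with ρ_S : G → G_S is injective. -/

import Mathlib

/-- The canonical surjection between presented groups when the set of relators grows. -/
def quotMap {α : Type*} {R S : Set (FreeGroup α)} (h : R ⊆ S) :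
    PresentedGroup R →* PresentedGroup S :=
  QuotientGroup.map _ _ (MonoidHom.id _) (fun _ hx => Subgroup.normalClosure_mono h hx)

/-- Let `G = ⟨Y ∣ R⟩` be a finitely generated presented group, `S ⊆ Y`, and
let `φ_S : F(Y) → F(Y)` be the homomorphism sending `y ↦ y` for `y ∈ S` and `y ↦ 1` for
`y ∉ S` (its image lies in `F(S) ≤ F(Y)`).  If `φ_S(R) ⊆ R`, then `S` is retractive in `G`:
the composite of the inclusion `⟨S⟩ ↪ G` with the quotient map `ρ_S : G → G_S` (killing the
generators outside `S`) is injective. -/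
theorem retractive_of_phi_rels_subset {α : Type} [Finite α]
    (R : Set (FreeGroup α)) (S : Set α)
    (φS : FreeGroup α →* FreeGroup α)
    (hφ_mem : ∀ a : α, a ∈ S → φS (FreeGroup.of a) = FreeGroup.of a)
    (hφ_not_mem : ∀ a : α, a ∉ S → φS (FreeGroup.of a) = 1)
    (hRS : φS '' R ⊆ R) :
    Set.InjOn
      (quotMap (Set.subset_union_left : R ⊆ R ∪ FreeGroup.of '' Sᶜ))
      ((Subgroup.closure ((fun a => (PresentedGroup.of a : PresentedGroup R)) '' S) :
          Subgroup (PresentedGroup R)) : Set (PresentedGroup R)) := by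
  -- the retraction
  set f : α → PresentedGroup R := fun a => QuotientGroup.mk (φS (FreeGroup.of a)) with hf
  have hlift : ∀ x : FreeGroup α,
      FreeGroup.lift f x = (QuotientGroup.mk (φS x) : PresentedGroup R) := by
    intro x
    have : (FreeGroup.lift f : FreeGroup α →* PresentedGroup R)
        = (QuotientGroup.mk' (Subgroup.normalClosure R)).comp φS := by
      apply FreeGroup.ext_hom
      intro a
      simp [hf]
      exact FreeGroup.lift_apply_of
    rw [this]; rfl
  have hrels : ∀ r ∈ R ∪ FreeGroup.of '' Sᶜ, FreeGroup.lift f r = 1 := by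
    rintro r (hr | ⟨a, ha, rfl⟩)
    · rw [hlift]
      have : φS r ∈ Subgroup.normalClosure R :=
        Subgroup.subset_normalClosure (hRS ⟨r, hr, rfl⟩)
      exact (QuotientGroup.eq_one_iff _).2 this
    · rw [hlift, hφ_not_mem a ha]
      simp
      rfl
  set ψ : PresentedGroup (R ∪ FreeGroup.of '' Sᶜ) →* PresentedGroup R :=
    PresentedGroup.toGroup hrels with hψ
  have key : ∀ x ∈ (Subgroup.closure
      ((fun a => (PresentedGroup.of a : PresentedGroup R)) '' S)),
      ψ (quotMap (Set.subset_union_left : R ⊆ R ∪ FreeGroup.of '' Sᶜ) x) = x := by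
    intro x hx
    induction hx using Subgroup.closure_induction with
    | mem y hy =>
        obtain ⟨a, ha, rfl⟩ := hy
        have h1 : quotMap (Set.subset_union_left : R ⊆ R ∪ FreeGroup.of '' Sᶜ)
            (PresentedGroup.of a) = PresentedGroup.of a := rfl
        rw [h1, hψ, PresentedGroup.toGroup.of, hf]
        simp only [hφ_mem a ha]
        rfl
    | one => simp
    | mul a b _ _ iha ihb => simp [map_mul, iha, ihb]
    | inv a _ iha => simp [map_inv, iha]
  intro x hx y hy hxy
  have := congrArg ψ hxy
  rwa [key x hx, key y hy] at this
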